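/- For any lower Eulerian poset R, h(R; t) = h(R^±; t), where R^± is the twins-poset born from R, a lower Eulerian poset of rank rk(R) + 1. -/

import Mathlib

attribute [local instance] Classical.propDecidable

noncomputable section

/-- The finite subposet `S` (with induced order) is ranked with rank function `ρ`:
ranks strictly increase, and covering relations (within `S`) increase rank by one. -/
def IsRankedOn {α : Type*} [PartialOrder α] (S : Finset α) (ρ : α → ℕ) : Prop :=
  (∀ x ∈ S, ∀ y ∈ S, x < y → ρ x < ρ y) ∧
  (∀ x ∈ S, ∀ y ∈ S, x < y → (∀ z ∈ S, ¬ (x < z ∧ z < y)) → ρ y = ρ x + 1)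

/-- The finite subposet `S` is locally Eulerian: it is ranked and every nontrivial
interval `[x,y]` in `S` has equally many elements of even and of odd rank. -/
def IsLocallyEulerianOn {α : Type*} [PartialOrder α] (S : Finset α) (ρ : α → ℕ) : Prop :=
  IsRankedOn S ρ ∧
  ∀ x ∈ S, ∀ y ∈ S, x < y →
    (S.filter (fun z => x ≤ z ∧ z ≤ y ∧ Even (ρ z))).card =
    (S.filter (fun z => x ≤ z ∧ z ≤ y ∧ ¬ Even (ρ z))).card

/-- Lower Eulerian: locally Eulerian with a minimum. -/
def IsLowerEulerianOn {α : Type*} [PartialOrder α] (S : Finset α) (ρ : α → ℕ) : Prop :=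
  IsLocallyEulerianOn S ρ ∧ ∃ b ∈ S, ∀ x ∈ S, b ≤ x

/-- Eulerian: lower Eulerian with a maximum. -/
def IsEulerianOn {α : Type*} [PartialOrder α] (S : Finset α) (ρ : α → ℕ) : Prop :=
  IsLowerEulerianOn S ρ ∧ ∃ t ∈ S, ∀ x ∈ S, x ≤ t

/-- `G` is a system of `g`-polynomials for the intervals of the finite poset `S` with rank
function `ρ`: `G x y = g([x,y]; t)`.  Defining property: `G x x = 1` and, for `x < y` of
rank difference `r`, `deg (G x y) < r/2` and
`t^r · (G x y)(1/t) = Σ_{x ≤ z ≤ y} (G x z) · (t−1)^{r − (ρ z − ρ x)}`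
(the left-hand side being `Polynomial.reflect r (G x y)`). -/
def IsGSystemOn {α : Type*} [PartialOrder α] (S : Finset α) (ρ : α → ℕ)
    (G : α → α → Polynomial ℤ) : Prop :=
  (∀ x ∈ S, G x x = 1) ∧
  ∀ x ∈ S, ∀ y ∈ S, x < y →
    2 * (G x y).natDegree < ρ y - ρ x ∧
    Polynomial.reflect (ρ y - ρ x) (G x y) =
      ∑ z ∈ S.filter (fun z => x ≤ z ∧ z ≤ y), G x z * (Polynomial.X - 1) ^ (ρ y - ρ z)

/-- `G` is a system of `g`-polynomials of the *dual* intervals of `S`: `G x y = g([x,y]^*; t)`. -/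
def IsDualGSystemOn {α : Type*} [PartialOrder α] (S : Finset α) (ρ : α → ℕ)
    (G : α → α → Polynomial ℤ) : Prop :=
  (∀ x ∈ S, G x x = 1) ∧
  ∀ x ∈ S, ∀ y ∈ S, x < y →
    2 * (G x y).natDegree < ρ y - ρ x ∧
    Polynomial.reflect (ρ y - ρ x) (G x y) =
      ∑ z ∈ S.filter (fun z => x ≤ z ∧ z ≤ y), G z y * (Polynomial.X - 1) ^ (ρ z - ρ x)

/-- The `h`-polynomial of a finite lower Eulerian poset `S` with minimum `b`, rank function
`ρ` and `g`-polynomial system `G`: it is defined by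
`t^n · h(S;1/t) = Σ_{x ∈ S} g([b,x];t) (t−1)^{n−ρ(b,x)}` where `n = rk S`; equivalently
`h(S;t) = reflect n (Σ_{x ∈ S} G b x · (t−1)^{sup ρ − ρ x})`, with `n = S.sup ρ − ρ b`. -/
def hPoly {α : Type*} [PartialOrder α] (ρ : α → ℕ) (G : α → α → Polynomial ℤ)
    (S : Finset α) (b : α) : Polynomial ℤ :=
  Polynomial.reflect (S.sup ρ - ρ b)
    (∑ x ∈ S, G b x * (Polynomial.X - 1) ^ (S.sup ρ - ρ x))

/-- The relative local `h`-polynomial `ℓ_B(Γ, x, y; t)` of an order-preserving map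
`σ : Γ → B` (with `Γ` realized as the finite poset `S` in `α`, and `B` as the finite poset
`T` in `β`), for `y ∈ Γ` and `x ∈ B` with `σ y ≤ x`:
`ℓ_B(Γ, x, y; t) = Σ_{σ(y) ≤ x' ≤ x} h((Γ_{≥y})_{x'}; t) · (−1)^{ρ(x',x)} · g([x',x]^*; t)`,
where `(Γ_{≥y})_{x'} = {y' ∈ Γ : y ≤ y', σ y' ≤ x'}`, `ρA, G` give the `h`-polynomials on
the source side, and `G'` is a system of `g`-polynomials of dual intervals of `T`. -/
def relLocH {α β : Type*} [PartialOrder α] [PartialOrder β]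
    (ρA : α → ℕ) (G : α → α → Polynomial ℤ) (σ : α → β) (S : Finset α) (y : α)
    (ρB : β → ℕ) (G' : β → β → Polynomial ℤ) (T : Finset β) (x : β) : Polynomial ℤ :=
  ∑ x' ∈ T.filter (fun x' => σ y ≤ x' ∧ x' ≤ x),
    (-1 : Polynomial ℤ) ^ (ρB x - ρB x') *
      hPoly ρA G (S.filter (fun y' => y ≤ y' ∧ σ y' ≤ x')) y * G' x' x

/-- `σ` is a strong formal subdivision from the finite poset `S ⊆ α` (rank function `ρA`)
to the finite poset `T ⊆ β` (rank function `ρB`): it is order preserving, rank increasing,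
strongly surjective, and satisfies the Euler-characteristic condition
`Σ_{y' ≥ y, σ y' = x} (−1)^{ρB x − ρA y'} = 1` whenever `y ∈ S`, `x ∈ T`, `σ y ≤ x`. -/
def IsSFSOn {α β : Type*} [PartialOrder α] [PartialOrder β]
    (S : Finset α) (ρA : α → ℕ) (σ : α → β) (T : Finset β) (ρB : β → ℕ) : Prop :=
  (∀ y ∈ S, σ y ∈ T) ∧
  (∀ y ∈ S, ∀ y' ∈ S, y ≤ y' → σ y ≤ σ y') ∧
  (∀ y ∈ S, ρA y ≤ ρB (σ y)) ∧
  (∀ x ∈ T, ∃ y ∈ S, σ y = x) ∧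
  (∀ y ∈ S, ∀ x ∈ T, σ y ≤ x → ∃ y' ∈ S, y ≤ y' ∧ ρA y' = ρB x ∧ σ y' = x) ∧
  (∀ y ∈ S, ∀ x ∈ T, σ y ≤ x →
    ∑ y' ∈ S.filter (fun y' => y ≤ y' ∧ σ y' = x), (-1 : ℤ) ^ (ρB x - ρA y') = 1)

open Polynomial Finset


open Polynomial Finset

lemma myReflect_zero' (p : Polynomial ℤ) : p.reflect 0 = p := by
  ext n
  rw [coeff_reflect]
  rcases Nat.eq_zero_or_pos n with h | h
  · subst h; rw [revAt_le (le_refl 0)]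
  · rw [revAt_eq_self_of_lt h]

lemma myReflect_fix_zero (N : ℕ) (p : Polynomial ℤ) (hd : 2 * p.natDegree < N)
    (h : p.reflect N = p) : p = 0 := by
  by_contra hp
  set d := p.natTrailingDegree with hdd
  have hdle : d ≤ p.natDegree := natTrailingDegree_le_natDegree p
  have h1 := congrArg (fun q : Polynomial ℤ => q.coeff (N - d)) h
  simp only [coeff_reflect] at h1
  rw [revAt_le (by omega), Nat.sub_sub_self (by omega)] at h1
  have h2 : p.coeff d ≠ 0 := trailingCoeff_nonzero_iff_nonzero.mpr hp
  rw [show p.coeff (N - d) = 0 from Polynomial.coeff_eq_zero_of_natDegree_lt (by omega)] at h1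
  exact h2 h1

lemma myG_unique (N : ℕ) (A B D : Polynomial ℤ) (hA : 2 * A.natDegree < N)
    (hB : 2 * B.natDegree < N) (hrA : A.reflect N = A + D) (hrB : B.reflect N = B + D) :
    A = B := by
  have h : (A - B).reflect N = A - B := by
    rw [Polynomial.reflect_sub, hrA, hrB]; ring
  have h4 : (A - B).natDegree ≤ max A.natDegree B.natDegree := natDegree_sub_le A B
  have hd : 2 * (A - B).natDegree < N := by
    rcases max_cases A.natDegree B.natDegree with ⟨he, _⟩ | ⟨he, _⟩ <;> omega
  have h0 := myReflect_fix_zero N (A - B) hd h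
  have := sub_eq_zero.mp h0
  exact this

lemma myReflect_succ (s : ℕ) (p : Polynomial ℤ) (hp : p.natDegree ≤ s) :
    p.reflect (s + 1) = Polynomial.X * p.reflect s := by
  ext n
  rw [coeff_reflect]
  rcases n with _ | m
  · rw [revAt_le (Nat.zero_le _), Nat.sub_zero, Polynomial.coeff_eq_zero_of_natDegree_lt (by omega)]
    simp [Polynomial.coeff_X_mul_zero]
  · rw [Polynomial.coeff_X_mul, coeff_reflect]
    rcases le_or_gt m s with h | h
    · rw [revAt_le (by omega), revAt_le h, Nat.succ_sub_succ]
    · rw [revAt_eq_self_of_lt (by omega), revAt_eq_self_of_lt h,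
        Polynomial.coeff_eq_zero_of_natDegree_lt (by omega),
        Polynomial.coeff_eq_zero_of_natDegree_lt (by omega)]

lemma myReflect_X_mul (s : ℕ) (p : Polynomial ℤ) (hp : p.natDegree ≤ s) :
    (Polynomial.X * p).reflect (s + 1) = p.reflect s := by
  have := Polynomial.reflect_mul (Polynomial.X : Polynomial ℤ) p
    (F := 1) (G := s) Polynomial.natDegree_X_le hp
  rw [add_comm] at this
  rw [this, Polynomial.reflect_one_X, one_mul]
open Polynomial Finset

lemma mySum_prod_bool {α M : Type*} [AddCommMonoid M] (S : Finset α)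
    (f : α × Bool → M) :
    ∑ p ∈ S ×ˢ (Finset.univ : Finset Bool), f p
      = ∑ z ∈ S, (f (z, false) + f (z, true)) := by
  rw [Finset.sum_product]
  refine Finset.sum_congr rfl fun z _ => ?_
  rw [Fintype.sum_bool, add_comm]

lemma mySum_filter_prod_bool {α M : Type*} [AddCommMonoid M] (S : Finset α)
    (Q : α × Bool → Prop) [DecidablePred Q] (f : α × Bool → M) :
    ∑ p ∈ (S ×ˢ (Finset.univ : Finset Bool)).filter Q, f p
      = (∑ z ∈ S.filter (fun z => Q (z, false)), f (z, false))
        + ∑ z ∈ S.filter (fun z => Q (z, true)), f (z, true) := by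
  rw [Finset.sum_filter, Finset.sum_filter, Finset.sum_filter, mySum_prod_bool,
    Finset.sum_add_distrib]

lemma myCard_filter_prod_bool {α : Type*} (S : Finset α) (Q : α × Bool → Prop)
    [DecidablePred Q] :
    ((S ×ˢ (Finset.univ : Finset Bool)).filter Q).card
      = (S.filter (fun z => Q (z, false))).card + (S.filter (fun z => Q (z, true))).card := by
  rw [Finset.card_filter, Finset.card_filter, Finset.card_filter, mySum_prod_bool,
    Finset.sum_add_distrib]

lemma myGpm_key {α : Type*} [PartialOrder α] (ρ : α → ℕ) (S : Finset α)
    (hmono : ∀ x ∈ S, ∀ y ∈ S, x < y → ρ x < ρ y)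
    (b : α) (hbS : b ∈ S) (hb : ∀ x ∈ S, b ≤ x)
    (G : α → α → Polynomial ℤ) (hG : IsGSystemOn S ρ G)
    (Gpm : α × Bool → α × Bool → Polynomial ℤ)
    (hGpm : IsGSystemOn (S ×ˢ (Finset.univ : Finset Bool)) (fun p => ρ p.1 + p.2.toNat) Gpm) :
    ∀ x ∈ S, Gpm (b, false) (x, false) = G b x ∧ Gpm (b, false) (x, true) = G b x := by
  classical
  have hmem : ∀ z ∈ S, ∀ γ : Bool, (z, γ) ∈ S ×ˢ (Finset.univ : Finset Bool) :=
    fun z hz γ => Finset.mem_product.mpr ⟨hz, Finset.mem_univ γ⟩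
  have hsplit : ∀ x ∈ S, S.filter (fun z => b ≤ z ∧ z ≤ x)
      = insert x (S.filter (fun z => b ≤ z ∧ z < x)) := by
    intro x hx
    ext z
    simp only [Finset.mem_filter, Finset.mem_insert]
    constructor
    · rintro ⟨hz, hbz, hzx⟩
      rcases lt_or_eq_of_le hzx with h | h
      · exact Or.inr ⟨hz, hbz, h⟩
      · exact Or.inl h
    · rintro (rfl | ⟨hz, hbz, hzx⟩)
      · exact ⟨hx, hb _ hx, le_refl _⟩
      · exact ⟨hz, hbz, le_of_lt hzx⟩
  have hnotmem : ∀ x : α, x ∉ S.filter (fun z => b ≤ z ∧ z < x) := by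
    intro x h
    exact absurd (Finset.mem_filter.mp h).2.2 (lt_irrefl x)
  have hGrec : ∀ x ∈ S, (G b x).reflect (ρ x - ρ b)
      = ∑ z ∈ S.filter (fun z => b ≤ z ∧ z ≤ x),
          G b z * (Polynomial.X - 1) ^ (ρ x - ρ z) := by
    intro x hx
    rcases eq_or_lt_of_le (hb x hx) with rfl | hlt
    · have hfil : S.filter (fun z => b ≤ z ∧ z ≤ b) = {b} := by
        ext z
        simp only [Finset.mem_filter, Finset.mem_singleton]
        constructor
        · rintro ⟨hz, _, hzb⟩; exact le_antisymm hzb (hb z hz)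
        · rintro rfl; exact ⟨hbS, le_refl _, le_refl _⟩
      rw [hfil, Finset.sum_singleton, Nat.sub_self, pow_zero, mul_one, hG.1 b hbS,
        myReflect_zero']
    · exact (hG.2 b hbS x hx hlt).2
  have hGdeg : ∀ x ∈ S, 2 * (G b x).natDegree ≤ ρ x - ρ b := by
    intro x hx
    rcases eq_or_lt_of_le (hb x hx) with rfl | hlt
    · rw [hG.1 b hbS]; simp
    · exact le_of_lt (hG.2 b hbS x hx hlt).1
  have hGsum_lt : ∀ x ∈ S, ∑ z ∈ S.filter (fun z => b ≤ z ∧ z < x),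
        G b z * (Polynomial.X - 1) ^ (ρ x - ρ z)
      = (G b x).reflect (ρ x - ρ b) - G b x := by
    intro x hx
    have h := hGrec x hx
    rw [hsplit x hx, Finset.sum_insert (hnotmem x), Nat.sub_self, pow_zero, mul_one] at h
    rw [h]; ring
  have main : ∀ n : ℕ, ∀ x ∈ S, ρ x = n →
      Gpm (b, false) (x, false) = G b x ∧ Gpm (b, false) (x, true) = G b x := by
    intro n
    induction n using Nat.strong_induction_on with
    | _ n IH =>
    intro x hx hn
    have hbx : b ≤ x := hb x hx
    have hρbx : ρ b ≤ ρ x := by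
      rcases eq_or_lt_of_le hbx with rfl | h
      · exact le_refl _
      · exact le_of_lt (hmono b hbS x hx h)
    have IH' : ∀ z ∈ S, z < x →
        Gpm (b, false) (z, false) = G b z ∧ Gpm (b, false) (z, true) = G b z := by
      intro z hz hzx
      exact IH (ρ z) (by rw [← hn]; exact hmono z hz x hx hzx) z hz rfl
    have hρz : ∀ z ∈ S, z ≤ x → ρ z ≤ ρ x := by
      intro z hz hzx
      rcases lt_or_eq_of_le hzx with h | rfl
      · exact le_of_lt (hmono z hz x hx h)
      · exact le_refl _
    -- Part A : Gpm (b,false) (x,false) = G b x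
    have hA : Gpm (b, false) (x, false) = G b x := by
      rcases eq_or_lt_of_le hbx with rfl | hbxlt
      · rw [hGpm.1 (b, false) (hmem b hbS false), hG.1 b hbS]
      · have hne : ((b, false) : α × Bool) ≠ (x, false) := by
          intro h
          exact ne_of_lt hbxlt (congrArg Prod.fst h)
        have hplt : ((b, false) : α × Bool) < (x, false) :=
          lt_of_le_of_ne (Prod.mk_le_mk.mpr ⟨le_of_lt hbxlt, le_refl false⟩) hne
        obtain ⟨hdeg, hrec⟩ := hGpm.2 (b, false) (hmem b hbS false) (x, false)
          (hmem x hx false) hplt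
        simp only [Bool.toNat_false, Bool.toNat_true, add_zero] at hdeg
        rw [mySum_filter_prod_bool] at hrec
        simp only [Prod.mk_le_mk, Bool.le_true, Bool.false_le, le_refl, and_true, true_and,
          show ((true : Bool) ≤ false) ↔ False from by decide, and_false, false_and,
          Finset.filter_false, Finset.sum_empty, add_zero,
          Bool.toNat_false, Bool.toNat_true] at hrec
        rw [hsplit x hx, Finset.sum_insert (hnotmem x)] at hrec
        simp only [Nat.sub_self, pow_zero, mul_one] at hrec
        have hrec2 : (Gpm (b, false) (x, false)).reflect (ρ x - ρ b)
            = Gpm (b, false) (x, false) + ((G b x).reflect (ρ x - ρ b) - G b x) := by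
          rw [hrec, ← hGsum_lt x hx]
          congr 1
          refine Finset.sum_congr rfl fun z hz => ?_
          obtain ⟨hz, -, hzx⟩ := Finset.mem_filter.mp hz
          rw [(IH' z hz hzx).1]
        have hrecG : (G b x).reflect (ρ x - ρ b)
            = G b x + ((G b x).reflect (ρ x - ρ b) - G b x) := by ring
        exact myG_unique (ρ x - ρ b) _ _ _ hdeg (hG.2 b hbS x hx hbxlt).1 hrec2 hrecG
    -- Part B : Gpm (b,false) (x,true) = G b x
    refine ⟨hA, ?_⟩
    have hne : ((b, false) : α × Bool) ≠ (x, true) := by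
      intro h
      exact Bool.false_ne_true (congrArg Prod.snd h)
    have hplt : ((b, false) : α × Bool) < (x, true) :=
      lt_of_le_of_ne (Prod.mk_le_mk.mpr ⟨hbx, Bool.false_le true⟩) hne
    obtain ⟨hdeg, hrec⟩ := hGpm.2 (b, false) (hmem b hbS false) (x, true)
      (hmem x hx true) hplt
    simp only [Bool.toNat_false, Bool.toNat_true, add_zero] at hdeg
    have hsucc : ρ x + 1 - ρ b = (ρ x - ρ b) + 1 := by omega
    rw [hsucc] at hdeg
    rw [mySum_filter_prod_bool] at hrec
    simp only [Prod.mk_le_mk, Bool.le_true, Bool.false_le, le_refl, and_true, true_and,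
      Bool.toNat_false, Bool.toNat_true, add_zero, Nat.add_sub_add_right] at hrec
    rw [hsucc] at hrec
    -- first (false) sum
    have hsum1 : ∑ z ∈ S.filter (fun z => b ≤ z ∧ z ≤ x),
          Gpm (b, false) (z, false) * (Polynomial.X - 1) ^ (ρ x + 1 - ρ z)
        = (G b x).reflect (ρ x - ρ b) * (Polynomial.X - 1) := by
      have he : ∀ z ∈ S.filter (fun z => b ≤ z ∧ z ≤ x),
          Gpm (b, false) (z, false) * (Polynomial.X - 1) ^ (ρ x + 1 - ρ z)
            = (G b z * (Polynomial.X - 1) ^ (ρ x - ρ z)) * (Polynomial.X - 1) := by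
        intro z hz
        obtain ⟨hz, hbz, hzx⟩ := Finset.mem_filter.mp hz
        have he2 : ρ x + 1 - ρ z = (ρ x - ρ z) + 1 := by
          have := hρz z hz hzx; omega
        have hg : Gpm (b, false) (z, false) = G b z := by
          rcases lt_or_eq_of_le hzx with h | rfl
          · exact (IH' z hz h).1
          · exact hA
        rw [he2, hg, pow_succ]; ring
      rw [Finset.sum_congr rfl he, ← Finset.sum_mul, ← hGrec x hx]
    -- second (true) sum
    have hsum2 : ∑ z ∈ S.filter (fun z => b ≤ z ∧ z ≤ x),
          Gpm (b, false) (z, true) * (Polynomial.X - 1) ^ (ρ x - ρ z)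
        = Gpm (b, false) (x, true) + ((G b x).reflect (ρ x - ρ b) - G b x) := by
      rw [hsplit x hx, Finset.sum_insert (hnotmem x), Nat.sub_self, pow_zero, mul_one,
        ← hGsum_lt x hx]
      congr 1
      refine Finset.sum_congr rfl fun z hz => ?_
      obtain ⟨hz, -, hzx⟩ := Finset.mem_filter.mp hz
      rw [(IH' z hz hzx).2]
    rw [hsum1, hsum2] at hrec
    have hdegG : (G b x).natDegree ≤ ρ x - ρ b := by
      have := hGdeg x hx; omega
    have hrec2 : (Gpm (b, false) (x, true)).reflect ((ρ x - ρ b) + 1)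
        = Gpm (b, false) (x, true)
          + ((G b x).reflect ((ρ x - ρ b) + 1) - G b x) := by
      rw [hrec, myReflect_succ (ρ x - ρ b) (G b x) hdegG]
      ring
    have hrecG : (G b x).reflect ((ρ x - ρ b) + 1)
        = G b x + ((G b x).reflect ((ρ x - ρ b) + 1) - G b x) := by ring
    exact myG_unique ((ρ x - ρ b) + 1) _ _ _ hdeg (by have := hGdeg x hx; omega) hrec2 hrecG
  intro x hx
  exact main (ρ x) x hx rfl
/-- for any finite lower Eulerian poset `R` (realized as the Finset `S` with
minimum `b` and rank function `ρ`), the twins-poset `R^±` (realized as `S ×ˢ Bool` with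
the product order, `(r, false)` playing the role of `φ⁻(r) ∈ R⁻` and `(r, true)` of
`r ∈ R`, with rank function `ρ^±(r, ε) = ρ r + ε`) is a lower Eulerian poset of rank
`rk(R) + 1`, and `h(R; t) = h(R^±; t)`. -/
theorem hPoly_twins {α : Type*} [PartialOrder α] (ρ : α → ℕ) (S : Finset α)
    (hS : IsLowerEulerianOn S ρ) (b : α) (hbS : b ∈ S) (hb : ∀ x ∈ S, b ≤ x)
    (G : α → α → Polynomial ℤ) (hG : IsGSystemOn S ρ G)
    (Gpm : α × Bool → α × Bool → Polynomial ℤ)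
    (hGpm : IsGSystemOn (S ×ˢ (Finset.univ : Finset Bool))
      (fun p => ρ p.1 + p.2.toNat) Gpm) :
    IsLowerEulerianOn (S ×ˢ (Finset.univ : Finset Bool)) (fun p => ρ p.1 + p.2.toNat) ∧
    (S ×ˢ (Finset.univ : Finset Bool)).sup (fun p => ρ p.1 + p.2.toNat) - ρ b
      = (S.sup ρ - ρ b) + 1 ∧
    hPoly ρ G S b
      = hPoly (fun p => ρ p.1 + p.2.toNat) Gpm (S ×ˢ (Finset.univ : Finset Bool)) (b, false) := by
  classical
  obtain ⟨⟨⟨hmono, hcover⟩, hEuler⟩, -⟩ := hS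
  have hmem : ∀ z ∈ S, ∀ γ : Bool, (z, γ) ∈ S ×ˢ (Finset.univ : Finset Bool) :=
    fun z hz γ => Finset.mem_product.mpr ⟨hz, Finset.mem_univ γ⟩
  have hρb : ∀ z ∈ S, ρ b ≤ ρ z := by
    intro z hz
    rcases eq_or_lt_of_le (hb z hz) with rfl | h
    · exact le_refl _
    · exact le_of_lt (hmono b hbS z hz h)
  have hSne : S.Nonempty := ⟨b, hbS⟩
  -- the twins poset is lower Eulerian
  have hLE : IsLowerEulerianOn (S ×ˢ (Finset.univ : Finset Bool))
      (fun p => ρ p.1 + p.2.toNat) := by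
    refine ⟨⟨⟨?_, ?_⟩, ?_⟩, ⟨(b, false), hmem b hbS false, ?_⟩⟩
    · -- rank strictly increasing
      rintro ⟨x, ε⟩ hxe ⟨y, δ⟩ hyd hlt
      obtain ⟨hxy, hed⟩ := Prod.mk_le_mk.mp (le_of_lt hlt)
      have hx : x ∈ S := (Finset.mem_product.mp hxe).1
      have hy : y ∈ S := (Finset.mem_product.mp hyd).1
      rcases eq_or_lt_of_le hxy with rfl | hxylt
      · cases ε <;> cases δ
        · exact absurd hlt (lt_irrefl _)
        · simp only [Bool.toNat_false, Bool.toNat_true]; omega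
        · exact absurd hed (by decide)
        · exact absurd hlt (lt_irrefl _)
      · have h1 := hmono x hx y hy hxylt
        have h2 : ε.toNat ≤ δ.toNat := by cases ε <;> cases δ <;> revert hed <;> decide
        simp only []
        omega
    · -- covering relations
      rintro ⟨x, ε⟩ hxe ⟨y, δ⟩ hyd hlt hcov2
      obtain ⟨hxy, hed⟩ := Prod.mk_le_mk.mp (le_of_lt hlt)
      have hne := ne_of_lt hlt
      have hx : x ∈ S := (Finset.mem_product.mp hxe).1
      have hy : y ∈ S := (Finset.mem_product.mp hyd).1
      cases ε <;> cases δ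
      · -- (x,false) ⋖ (y,false)
        have hxylt : x < y := by
          rcases eq_or_lt_of_le hxy with rfl | h
          · exact absurd rfl hne
          · exact h
        have hcov3 : ∀ z ∈ S, ¬ (x < z ∧ z < y) := by
          rintro z hz ⟨h1, h2⟩
          exact hcov2 (z, false) (hmem z hz false)
            ⟨Prod.mk_lt_mk_iff_left.mpr h1, Prod.mk_lt_mk_iff_left.mpr h2⟩
        have := hcover x hx y hy hxylt hcov3
        simp only [Bool.toNat_false]
        omega
      · -- (x,false) ⋖ (y,true) : forces x = y
        have hxeqy : x = y := by
          by_contra hxy'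
          have hxylt : x < y := lt_of_le_of_ne hxy hxy'
          refine hcov2 (x, true) (hmem x hx true) ⟨?_, ?_⟩
          · refine lt_of_le_of_ne (Prod.mk_le_mk.mpr ⟨le_refl x, Bool.false_le true⟩) ?_
            intro h
            exact Bool.false_ne_true (congrArg Prod.snd h)
          · exact Prod.mk_lt_mk_iff_left.mpr hxylt
        subst hxeqy
        simp only [Bool.toNat_false, Bool.toNat_true]
      · exact absurd hed (by decide)
      · -- (x,true) ⋖ (y,true)
        have hxylt : x < y := by
          rcases eq_or_lt_of_le hxy with rfl | h
          · exact absurd rfl hne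
          · exact h
        have hcov3 : ∀ z ∈ S, ¬ (x < z ∧ z < y) := by
          rintro z hz ⟨h1, h2⟩
          exact hcov2 (z, true) (hmem z hz true)
            ⟨Prod.mk_lt_mk_iff_left.mpr h1, Prod.mk_lt_mk_iff_left.mpr h2⟩
        have := hcover x hx y hy hxylt hcov3
        simp only [Bool.toNat_true]
        omega
    · -- locally Eulerian counts
      rintro ⟨x, ε⟩ hxe ⟨y, δ⟩ hyd hlt
      obtain ⟨hxy, hed⟩ := Prod.mk_le_mk.mp (le_of_lt hlt)
      have hne := ne_of_lt hlt
      have hx : x ∈ S := (Finset.mem_product.mp hxe).1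
      have hy : y ∈ S := (Finset.mem_product.mp hyd).1
      rw [myCard_filter_prod_bool, myCard_filter_prod_bool]
      cases ε <;> cases δ
      · -- false, false
        have hxylt : x < y := by
          rcases eq_or_lt_of_le hxy with rfl | h
          · exact absurd rfl hne
          · exact h
        simp only [Prod.mk_le_mk, Bool.le_true, Bool.false_le, le_refl, and_true, true_and,
          show ((true : Bool) ≤ false) ↔ False from by decide, and_false, false_and,
          Finset.filter_false, Finset.card_empty, add_zero,
          Bool.toNat_false, Bool.toNat_true]
        exact hEuler x hx y hy hxylt
      · -- false, true
        simp only [Prod.mk_le_mk, Bool.le_true, Bool.false_le, le_refl, and_true, true_and,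
          Bool.toNat_false, Bool.toNat_true, add_zero, Nat.even_add_one, not_not]
        omega
      · exact absurd hed (by decide)
      · -- true, true
        have hxylt : x < y := by
          rcases eq_or_lt_of_le hxy with rfl | h
          · exact absurd rfl hne
          · exact h
        simp only [Prod.mk_le_mk, Bool.le_true, Bool.false_le, le_refl, and_true, true_and,
          show ((true : Bool) ≤ false) ↔ False from by decide, and_false, false_and,
          Finset.filter_false, Finset.card_empty, zero_add,
          Bool.toNat_false, Bool.toNat_true, add_zero, Nat.even_add_one, not_not]
        exact (hEuler x hx y hy hxylt).symm
    · -- (b, false) is the minimum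
      rintro ⟨z, γ⟩ hzg
      exact Prod.mk_le_mk.mpr ⟨hb z ((Finset.mem_product.mp hzg).1), Bool.false_le γ⟩
  -- the rank of the twins poset
  have hsup : (S ×ˢ (Finset.univ : Finset Bool)).sup (fun p => ρ p.1 + p.2.toNat)
      = S.sup ρ + 1 := by
    apply le_antisymm
    · apply Finset.sup_le
      rintro ⟨z, γ⟩ hp
      have hz : z ∈ S := (Finset.mem_product.mp hp).1
      have h1 : ρ z ≤ S.sup ρ := Finset.le_sup hz
      have h2 : γ.toNat ≤ 1 := by cases γ <;> decide
      simp only []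
      omega
    · obtain ⟨z, hz, hzs⟩ := Finset.exists_mem_eq_sup S hSne ρ
      have h1 : (fun p : α × Bool => ρ p.1 + p.2.toNat) (z, true)
          ≤ (S ×ˢ (Finset.univ : Finset Bool)).sup (fun p => ρ p.1 + p.2.toNat) :=
        Finset.le_sup (f := fun p : α × Bool => ρ p.1 + p.2.toNat) (hmem z hz true)
      simp only [Bool.toNat_true] at h1
      omega
  have hbsup : ρ b ≤ S.sup ρ := Finset.le_sup hbS
  refine ⟨hLE, ?_, ?_⟩
  · simp only [hsup, Bool.toNat_false, add_zero]
    omega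
  · -- the h-polynomial equality
    have hkey := myGpm_key ρ S hmono b hbS hb G hG Gpm hGpm
    have hGdeg : ∀ x ∈ S, (G b x).natDegree ≤ ρ x - ρ b := by
      intro x hx
      rcases eq_or_lt_of_le (hb x hx) with rfl | hlt
      · rw [hG.1 b hbS]; simp
      · have := (hG.2 b hbS x hx hlt).1; omega
    unfold hPoly
    simp only [hsup, Bool.toNat_false, add_zero]
    rw [mySum_prod_bool]
    have hdegP : (∑ z ∈ S, G b z * (Polynomial.X - 1) ^ (S.sup ρ - ρ z)).natDegree
        ≤ S.sup ρ - ρ b := by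
      apply Polynomial.natDegree_sum_le_of_forall_le
      intro z hz
      have h1 := hGdeg z hz
      have h2 : ((Polynomial.X - 1 : Polynomial ℤ) ^ (S.sup ρ - ρ z)).natDegree
          ≤ S.sup ρ - ρ z := by
        refine le_trans Polynomial.natDegree_pow_le ?_
        have h3 : ((Polynomial.X : Polynomial ℤ) - 1).natDegree = 1 := by
          rw [← Polynomial.C_1]
          exact Polynomial.natDegree_X_sub_C 1
        rw [h3, mul_one]
      refine le_trans (Polynomial.natDegree_mul_le) ?_
      have h4 : ρ z ≤ S.sup ρ := Finset.le_sup hz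
      have h5 : ρ b ≤ ρ z := hρb z hz
      omega
    have hsum : (∑ z ∈ S,
          (Gpm (b, false) (z, false) * (Polynomial.X - 1) ^ (S.sup ρ + 1 - (ρ z + (false : Bool).toNat))
            + Gpm (b, false) (z, true) * (Polynomial.X - 1) ^ (S.sup ρ + 1 - (ρ z + (true : Bool).toNat))))
        = Polynomial.X * ∑ z ∈ S, G b z * (Polynomial.X - 1) ^ (S.sup ρ - ρ z) := by
      rw [Finset.mul_sum]
      refine Finset.sum_congr rfl fun z hz => ?_
      have hzn : ρ z ≤ S.sup ρ := Finset.le_sup hz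
      rw [(hkey z hz).1, (hkey z hz).2]
      simp only [Bool.toNat_false, Bool.toNat_true, add_zero]
      rw [show S.sup ρ + 1 - ρ z = (S.sup ρ - ρ z) + 1 from by omega,
        show S.sup ρ + 1 - (ρ z + 1) = S.sup ρ - ρ z from by omega, pow_succ]
      ring
    rw [hsum, show S.sup ρ + 1 - ρ b = (S.sup ρ - ρ b) + 1 from by omega,
      myReflect_X_mul (S.sup ρ - ρ b) _ hdegP]

end
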